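/- arXiv:1910.00206 — 2 statements merged into one kernel-verified Lean document; each statement's English description precedes it below -/
import Mathlib

section
/- If v_1, …, v_d is LDP fan data with exactly three singular cones, then d ≤ 6. Equivalently, a toric log del Pezzo surface with exactly three singular points has Picard number at most four. -/
/-- The determinant `det(u, w) = u₁w₂ − u₂w₁` of two integer vectors. -/
def detZ (u w : ℤ × ℤ) : ℤ := u.1 * w.2 - u.2 * w.1

/-- The real vector associated to an integer vector. -/
noncomputable def toR2 (u : ℤ × ℤ) : ℝ × ℝ := ((u.1 : ℝ), (u.2 : ℝ))

/-- The cone `ℝ_{≥0} u + ℝ_{≥0} w` spanned by two integer vectors. -/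
def coneOf (u w : ℤ × ℤ) : Set (ℝ × ℝ) :=
  {x | ∃ a b : ℝ, 0 ≤ a ∧ 0 ≤ b ∧ x = a • toR2 u + b • toR2 w}

/-- Complete fan data of length `d`: a cyclic sequence of primitive integer vectors with
`det(v_i, v_{i+1}) ≥ 1` whose successive cones cover `ℝ²` and have pairwise disjoint
interiors. -/
def IsCompleteFanData (d : ℕ) (v : ZMod d → ℤ × ℤ) : Prop :=
  3 ≤ d ∧
  (∀ i, Int.gcd (v i).1 (v i).2 = 1) ∧
  (∀ i, 1 ≤ detZ (v i) (v (i + 1))) ∧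
  (⋃ i, coneOf (v i) (v (i + 1))) = Set.univ ∧
  ∀ i j, i ≠ j →
    interior (coneOf (v i) (v (i + 1))) ∩ interior (coneOf (v j) (v (j + 1))) = ∅

/-- `f(i) = det(v_{i−1}, v_i) + det(v_i, v_{i+1}) + det(v_{i+1}, v_{i−1})`. -/
def fanF (d : ℕ) (v : ZMod d → ℤ × ℤ) (i : ZMod d) : ℤ :=
  detZ (v (i - 1)) (v i) + detZ (v i) (v (i + 1)) + detZ (v (i + 1)) (v (i - 1))

/-- LDP fan data: complete fan data with `f(i) ≥ 1` for all `i`. -/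
def IsLDPFanData (d : ℕ) (v : ZMod d → ℤ × ℤ) : Prop :=
  IsCompleteFanData d v ∧ ∀ i, 1 ≤ fanF d v i

/-- The number of singular cones, i.e. indices `i` with `det(v_i, v_{i+1}) ≥ 2`. -/
noncomputable def numSingular (d : ℕ) (v : ZMod d → ℤ × ℤ) : ℕ :=
  {i : ZMod d | 2 ≤ detZ (v i) (v (i + 1))}.ncard

/-- Equivalence of fan data: some `GL(2, ℤ)` matrix maps the vector set of one
bijectively onto the vector set of the other. -/
def FanEquiv {d₁ d₂ : ℕ} (v : ZMod d₁ → ℤ × ℤ) (w : ZMod d₂ → ℤ × ℤ) : Prop :=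
  ∃ M : Matrix (Fin 2) (Fin 2) ℤ, IsUnit M.det ∧
    (fun u : ℤ × ℤ => (M 0 0 * u.1 + M 0 1 * u.2, M 1 0 * u.1 + M 1 1 * u.2)) ''
      Set.range v = Set.range w

/-- The cyclic sequence of length `d − 1` obtained by deleting the vector `v_k`:
it lists `v_{k+1}, v_{k+2}, …, v_{k+d−1}`. -/
def deleteAt {d : ℕ} (v : ZMod d → ℤ × ℤ) (k : ZMod d) : ZMod (d - 1) → ℤ × ℤ :=
  fun i => v (k + 1 + (i.val : ZMod d))

/-- The cyclic sequence of length `d + 1` obtained by inserting `v_k + v_{k+1}`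
between `v_k` and `v_{k+1}`. -/
def insertAt {d : ℕ} (v : ZMod d → ℤ × ℤ) (k : ZMod d) : ZMod (d + 1) → ℤ × ℤ :=
  fun i =>
    if i.val ≤ k.val then v ((i.val : ℕ) : ZMod d)
    else if i.val = k.val + 1 then v k + v (k + 1)
    else v ((i.val - 1 : ℕ) : ZMod d)

namespace ThreeSingularAux

open Complex Real Set

/-- The complex number attached to an integer vector. -/
noncomputable def cx (u : ℤ × ℤ) : ℂ := ⟨(u.1 : ℝ), (u.2 : ℝ)⟩

@[simp] lemma cx_re (u : ℤ × ℤ) : (cx u).re = (u.1 : ℝ) := rfl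
@[simp] lemma cx_im (u : ℤ × ℤ) : (cx u).im = (u.2 : ℝ) := rfl

lemma detZ_skew (u w : ℤ × ℤ) : detZ w u = - detZ u w := by simp only [detZ]; ring

lemma pluecker (a b c e : ℤ × ℤ) :
    detZ a c * detZ b e = detZ a b * detZ c e + detZ a e * detZ b c := by
  simp only [detZ]; ring

/-- real 2×2 determinant -/
def detR (u w : ℝ × ℝ) : ℝ := u.1 * w.2 - u.2 * w.1

lemma detR_toR2 (u w : ℤ × ℤ) : detR (toR2 u) (toR2 w) = ((detZ u w : ℤ) : ℝ) := by
  simp only [detR, toR2, detZ]; push_cast; ring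

lemma detZ_eq_im (u w : ℤ × ℤ) :
    ((detZ u w : ℤ) : ℝ) = ((starRingEnd ℂ) (cx u) * cx w).im := by
  simp only [detZ, Complex.mul_im, Complex.conj_re, Complex.conj_im, cx_re, cx_im]
  push_cast; ring

lemma conj_exp_real_mul_I (x : ℝ) :
    (starRingEnd ℂ) (Complex.exp (x * I)) = Complex.exp (-(x:ℂ) * I) := by
  rw [← Complex.exp_conj]
  congr 1
  simp [Complex.conj_I]

lemma exp_merge (x y : ℝ) :
    Complex.exp (-(x:ℂ) * I) * Complex.exp ((y:ℝ) * I) = Complex.exp (((y - x : ℝ) : ℂ) * I) := by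
  rw [← Complex.exp_add]
  congr 1
  push_cast
  ring

lemma openCone_subset_interior (u w : ℤ × ℤ) (hD : 1 ≤ detZ u w) :
    {x : ℝ × ℝ | 0 < detR (toR2 u) x ∧ 0 < detR x (toR2 w)} ⊆ interior (coneOf u w) := by
  have hD' : (0:ℝ) < detR (toR2 u) (toR2 w) := by
    rw [detR_toR2]; exact_mod_cast hD
  apply interior_maximal
  · rintro x ⟨h1, h2⟩
    refine ⟨detR x (toR2 w) / detR (toR2 u) (toR2 w),
      detR (toR2 u) x / detR (toR2 u) (toR2 w),
      le_of_lt (div_pos h2 hD'), le_of_lt (div_pos h1 hD'), ?_⟩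
    have hne : detR (toR2 u) (toR2 w) ≠ 0 := ne_of_gt hD'
    have h1' : x.1 * detR (toR2 u) (toR2 w) =
        detR x (toR2 w) * (toR2 u).1 + detR (toR2 u) x * (toR2 w).1 := by
      simp only [detR]; ring
    have h2' : x.2 * detR (toR2 u) (toR2 w) =
        detR x (toR2 w) * (toR2 u).2 + detR (toR2 u) x * (toR2 w).2 := by
      simp only [detR]; ring
    apply Prod.ext
    · simp only [Prod.fst_add, Prod.smul_fst, smul_eq_mul]
      field_simp
      linarith [h1']
    · simp only [Prod.snd_add, Prod.smul_snd, smul_eq_mul]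
      field_simp
      linarith [h2']
  · apply IsOpen.inter
    · exact isOpen_lt continuous_const
        ((continuous_const.mul continuous_snd).sub (continuous_const.mul continuous_fst))
    · exact isOpen_lt continuous_const
        ((continuous_fst.mul continuous_const).sub (continuous_snd.mul continuous_const))

lemma exists_pair (d : ℕ) [NeZero d] (hd : 7 ≤ d) (S : Set (ZMod d)) (hS : S.ncard = 3) :
    ∃ j : ZMod d, j ∉ S ∧ j + 3 ∉ S := by
  by_contra hcon
  push_neg at hcon
  have hsub : (Set.univ : Set (ZMod d)) ⊆ S ∪ (fun t => t - 3) '' S := by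
    intro j _
    by_cases hj : j ∈ S
    · exact Or.inl hj
    · exact Or.inr ⟨j + 3, hcon j hj, by ring⟩
  have h1 : (Set.univ : Set (ZMod d)).ncard = d := by
    rw [Set.ncard_univ, Nat.card_zmod]
  have h2 := Set.ncard_le_ncard hsub (Set.toFinite _)
  have h3 := Set.ncard_union_le S ((fun t => t - 3) '' S)
  have h4 := Set.ncard_image_le (s := S) (f := fun t => t - 3) S.toFinite
  omega

section Main
variable (d : ℕ) (v : ZMod d → ℤ × ℤ)

lemma main_angles (hd : 7 ≤ d)
    (hprim : ∀ i, Int.gcd (v i).1 (v i).2 = 1)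
    (hdet1 : ∀ i, 1 ≤ detZ (v i) (v (i + 1)))
    (hdisj : ∀ i j, i ≠ j →
      interior (coneOf (v i) (v (i + 1))) ∩ interior (coneOf (v j) (v (j + 1))) = ∅)
    (i₀ : ZMod d) :
    ∃ B r : ℕ → ℝ, (∀ n, 0 < r n) ∧ (∀ n, B n < B (n + 1)) ∧ (∀ n, B (n + 1) < B n + π) ∧
      B 0 = 0 ∧ B d = 2 * π ∧
      (∀ m n : ℕ, ((detZ (v (i₀ + (m : ZMod d))) (v (i₀ + (n : ZMod d))) : ℤ) : ℝ) =
        r m * r n * Real.sin (B n - B m)) := by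
  haveI : NeZero d := ⟨by omega⟩
  classical
  set z : ℕ → ℂ := fun n => cx (v (i₀ + (n : ZMod d))) with hz_def
  have hz0 : ∀ n : ℕ, z n ≠ 0 := by
    intro n hzero
    have hre := congrArg Complex.re hzero
    have him := congrArg Complex.im hzero
    simp only [hz_def, cx_re, cx_im, Complex.zero_re, Complex.zero_im] at hre him
    have h1 : (v (i₀ + (n : ZMod d))).1 = 0 := by exact_mod_cast hre
    have h2 : (v (i₀ + (n : ZMod d))).2 = 0 := by exact_mod_cast him
    have := hprim (i₀ + (n : ZMod d))
    rw [h1, h2] at this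
    simp [Int.gcd] at this
  have hzsucc : ∀ n : ℕ, z (n + 1) = cx (v ((i₀ + (n : ZMod d)) + 1)) := by
    intro n
    simp only [hz_def]
    congr 2
    push_cast
    ring
  have hdet_im : ∀ n : ℕ, ((detZ (v (i₀ + (n : ZMod d))) (v ((i₀ + (n : ZMod d)) + 1)) : ℤ) : ℝ)
      = ((starRingEnd ℂ) (z n) * z (n + 1)).im := by
    intro n
    rw [hzsucc n]
    exact detZ_eq_im _ _
  have him : ∀ n : ℕ, 0 < ((z (n + 1)) / z n).im := by
    intro n
    rw [Complex.div_im, div_sub_div_same]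
    apply div_pos
    · have h1 := hdet_im n
      have h2 : (1 : ℝ) ≤ ((detZ (v (i₀ + (n : ZMod d))) (v ((i₀ + (n : ZMod d)) + 1)) : ℤ) : ℝ) := by
        exact_mod_cast hdet1 (i₀ + (n : ZMod d))
      rw [h1] at h2
      simp only [Complex.mul_im, Complex.conj_re, Complex.conj_im] at h2
      nlinarith
    · exact Complex.normSq_pos.mpr (hz0 n)
  set l : ℕ → ℝ := fun n => ((z (n + 1)) / z n).arg with hl_def
  have hl : ∀ n, 0 < l n ∧ l n < π := by
    intro n
    have h1 : 0 ≤ l n := Complex.arg_nonneg_iff.mpr (le_of_lt (him n))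
    have h2 : l n ≤ π := Complex.arg_le_pi _
    constructor
    · refine lt_of_le_of_ne h1 (fun hcon => ?_)
      have := (Complex.arg_eq_zero_iff).mp hcon.symm
      have hx := him n
      rw [this.2] at hx
      exact lt_irrefl 0 hx
    · refine lt_of_le_of_ne h2 (fun hcon => ?_)
      have := (Complex.arg_eq_pi_iff).mp hcon
      have hx := him n
      rw [this.2] at hx
      exact lt_irrefl 0 hx
  set B : ℕ → ℝ := fun n => ∑ k ∈ Finset.range n, l k with hB_def
  have hB0 : B 0 = 0 := by simp [hB_def]
  have hBsucc : ∀ n, B (n + 1) = B n + l n := by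
    intro n; simp [hB_def, Finset.sum_range_succ]
  have hBmono : ∀ n, B n < B (n + 1) := fun n => by
    rw [hBsucc]; linarith [(hl n).1]
  have hBgap : ∀ n, B (n + 1) < B n + π := fun n => by
    rw [hBsucc]; linarith [(hl n).2]
  have hSM : StrictMono B := strictMono_nat_of_lt_succ hBmono
  set r : ℕ → ℝ := fun n => ‖z n‖ with hr_def
  have hr : ∀ n, 0 < r n := fun n => norm_pos_iff.mpr (hz0 n)
  have hr0C : ((r 0 : ℝ) : ℂ) ≠ 0 := by
    exact_mod_cast (hr 0).ne'
  have key : ∀ n, z n * ((r 0 : ℝ) : ℂ) = ((r n : ℝ) : ℂ) * Complex.exp ((B n : ℝ) * I) * z 0 := by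
    intro n
    induction n with
    | zero =>
      rw [hB0]
      push_cast
      simp [Complex.exp_zero]
      ring
    | succ n ih =>
      have habs := Complex.norm_mul_exp_arg_mul_I (z (n + 1) / z n)
      have hzn := hz0 n
      have hstep : z (n + 1) = ((‖z (n + 1) / z n‖ : ℝ) : ℂ)
          * Complex.exp ((l n : ℝ) * I) * z n := by
        simp only [hl_def]
        rw [habs]
        exact (div_mul_cancel₀ _ hzn).symm
      have hrdiv : (‖z (n + 1) / z n‖ : ℝ) = r (n + 1) / r n := by
        rw [norm_div]
      have hrnne : ((r n : ℝ) : ℂ) ≠ 0 := by exact_mod_cast (hr n).ne'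
      calc z (n + 1) * ((r 0 : ℝ) : ℂ)
          = ((‖z (n + 1) / z n‖ : ℝ) : ℂ) * Complex.exp ((l n : ℝ) * I)
            * (z n * ((r 0 : ℝ) : ℂ)) := by
              conv_lhs => rw [hstep]
              ring
        _ = ((r (n+1) / r n : ℝ) : ℂ) * Complex.exp ((l n : ℝ) * I)
            * (((r n : ℝ) : ℂ) * Complex.exp ((B n : ℝ) * I) * z 0) := by rw [hrdiv, ih]
        _ = ((r (n + 1) : ℝ) : ℂ) * Complex.exp ((B (n + 1) : ℝ) * I) * z 0 := by
            rw [hBsucc n, Complex.ofReal_add, add_mul, Complex.exp_add]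
            push_cast
            field_simp [hrnne]
  have hconjz0 : (starRingEnd ℂ) (z 0) * z 0 = ((r 0 : ℝ) : ℂ) * ((r 0 : ℝ) : ℂ) := by
    rw [mul_comm, Complex.mul_conj]
    rw [Complex.normSq_eq_norm_sq]
    push_cast
    ring
  have keyconj : ∀ n, (starRingEnd ℂ) (z n) * ((r 0 : ℝ) : ℂ)
      = ((r n : ℝ) : ℂ) * Complex.exp (-(B n : ℂ) * I) * (starRingEnd ℂ) (z 0) := by
    intro n
    have e1 := congrArg (starRingEnd ℂ) (key n)
    simp only [map_mul, Complex.conj_ofReal, conj_exp_real_mul_I] at e1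
    exact e1
  have dictC : ∀ m n : ℕ, (starRingEnd ℂ) (z m) * z n
      = ((r m : ℝ) : ℂ) * ((r n : ℝ) : ℂ) * Complex.exp (((B n - B m : ℝ) : ℂ) * I) := by
    intro m n
    apply mul_right_cancel₀ (mul_ne_zero hr0C hr0C)
    calc (starRingEnd ℂ) (z m) * z n * (((r 0:ℝ):ℂ) * ((r 0:ℝ):ℂ))
        = ((starRingEnd ℂ) (z m) * ((r 0:ℝ):ℂ)) * (z n * ((r 0:ℝ):ℂ)) := by ring
      _ = (((r m:ℝ):ℂ) * Complex.exp (-(B m : ℂ) * I) * (starRingEnd ℂ) (z 0))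
          * (((r n:ℝ):ℂ) * Complex.exp ((B n : ℝ) * I) * z 0) := by rw [keyconj m, key n]
      _ = ((r m:ℝ):ℂ) * ((r n:ℝ):ℂ)
          * (Complex.exp (-(B m : ℂ) * I) * Complex.exp ((B n : ℝ) * I))
          * ((starRingEnd ℂ) (z 0) * z 0) := by ring
      _ = ((r m:ℝ):ℂ) * ((r n:ℝ):ℂ) * Complex.exp (((B n - B m : ℝ) : ℂ) * I)
          * (((r 0:ℝ):ℂ) * ((r 0:ℝ):ℂ)) := by rw [exp_merge (B m) (B n), hconjz0]
      _ = _ := by ring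
  have dict : ∀ m n : ℕ, ((detZ (v (i₀ + (m : ZMod d))) (v (i₀ + (n : ZMod d))) : ℤ) : ℝ)
      = r m * r n * Real.sin (B n - B m) := by
    intro m n
    have h1 : ((detZ (v (i₀ + (m : ZMod d))) (v (i₀ + (n : ZMod d))) : ℤ) : ℝ)
        = ((starRingEnd ℂ) (z m) * z n).im := detZ_eq_im _ _
    rw [h1, dictC m n]
    simp only [Complex.mul_im, Complex.mul_re, Complex.ofReal_re, Complex.ofReal_im,
      Complex.exp_ofReal_mul_I_im, Complex.exp_ofReal_mul_I_re]
    ring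
  have hzd : z d = z 0 := by
    have e : (i₀ + ((d : ℕ) : ZMod d)) = i₀ + ((0 : ℕ) : ZMod d) := by
      simp [ZMod.natCast_self]
    simp only [hz_def]
    rw [e]
  have hrd : r d = r 0 := by simp only [hr_def]; rw [hzd]
  have hexp1 : Complex.exp ((B d : ℝ) * I) = 1 := by
    have hk := key d
    rw [hzd, hrd] at hk
    have h2 : ((r 0:ℝ):ℂ) * Complex.exp ((B d : ℝ) * I) * z 0 = ((r 0:ℝ):ℂ) * 1 * z 0 := by
      rw [← hk]; ring
    have h3 := mul_right_cancel₀ (hz0 0) h2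
    exact mul_left_cancel₀ hr0C h3
  obtain ⟨k, hk⟩ := Complex.exp_eq_one_iff.mp hexp1
  have hkR : B d = (k : ℝ) * (2 * π) := by
    have h1 : ((B d : ℝ) : ℂ) * I = (((k : ℝ) * (2 * π) : ℝ) : ℂ) * I := by
      rw [hk]; push_cast; ring
    have h2 := mul_right_cancel₀ Complex.I_ne_zero h1
    exact_mod_cast h2
  have hBdpos : 0 < B d := by
    have := hSM (show 0 < d by omega)
    rw [hB0] at this; exact this
  have hk1 : 1 ≤ k := by
    by_contra hcon
    push_neg at hcon
    have hkr : (k:ℝ) ≤ 0 := by exact_mod_cast (by omega : k ≤ 0)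
    nlinarith [Real.pi_pos]
  have hBd : B d = 2 * π := by
    rcases eq_or_lt_of_le hk1 with he | hlt
    · rw [hkR, ← he]; push_cast; ring
    · exfalso
      have hk2 : (2:ℝ) ≤ (k:ℝ) := by exact_mod_cast hlt
      have hBd4 : 4 * π ≤ B d := by rw [hkR]; nlinarith [Real.pi_pos]
      have hB1pos : 0 < B 1 := by have := hBmono 0; rw [hB0] at this; exact this
      have hB1pi : B 1 < π := by have := hBgap 0; rw [hB0] at this; linarith
      set F : Finset ℝ := (Finset.range (d + 1)).image (fun j => B j - 2 * π) with hF
      have hio : (Set.Ioo (0:ℝ) (B 1)).Infinite := Set.Ioo_infinite hB1pos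
      obtain ⟨c, hcmem⟩ := (hio.diff (F : Finset ℝ).finite_toSet).nonempty
      obtain ⟨⟨hc0, hc1⟩, hcF⟩ := hcmem
      have hcnotB : ∀ j, j ≤ d → B j ≠ c + 2 * π := by
        intro j hj heq
        apply hcF
        simp only [hF, Finset.coe_image, Set.mem_image, Finset.mem_coe, Finset.mem_range]
        exact ⟨j, by omega, by linarith⟩
      have hcpi : c < π := lt_trans hc1 hB1pi
      have hex : ∃ n, c + 2 * π < B n := ⟨d, by linarith [Real.pi_pos]⟩
      set m1 := Nat.find hex with hm1def
      have hm1p : c + 2 * π < B m1 := Nat.find_spec hex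
      have hm1le : m1 ≤ d := Nat.find_le (by linarith [Real.pi_pos])
      have hm1ge : 2 ≤ m1 := by
        have h2' : 1 < m1 := by
          rw [hm1def, Nat.lt_find_iff]
          intro j hj
          interval_cases j
          · rw [hB0]; intro hcon; linarith [Real.pi_pos]
          · intro hcon; linarith [Real.pi_pos]
        omega
      set m := m1 - 1 with hmdef
      have hmm1 : m + 1 = m1 := by omega
      have hBmlt : B m < c + 2 * π := by
        have hnot : ¬ (c + 2 * π < B m) := Nat.find_min hex (by omega)
        push_neg at hnot
        exact lt_of_le_of_ne hnot (hcnotB m (by omega))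
      have hmd : m < d := by omega
      have h1m : 1 ≤ m := by omega
      have hm1p' : c + 2 * π < B (m + 1) := by rw [hmm1]; exact hm1p
      set w' : ℂ := Complex.exp ((c:ℝ) * I) * z 0 with hw'
      set x : ℝ × ℝ := (w'.re, w'.im) with hx
      have hdetRx : ∀ n : ℕ,
          detR (toR2 (v (i₀ + (n : ZMod d)))) x = r n * r 0 * Real.sin (c - B n) := by
        intro n
        have h1 : detR (toR2 (v (i₀ + (n : ZMod d)))) x = ((starRingEnd ℂ) (z n) * w').im := by
          simp only [detR, toR2, hx, hz_def, Complex.mul_im, Complex.conj_re, Complex.conj_im,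
            cx_re, cx_im]
          ring
        rw [h1]
        have h2 : (starRingEnd ℂ) (z n) * w'
            = ((r n : ℝ):ℂ) * ((r 0 : ℝ):ℂ) * Complex.exp (((c - B n : ℝ):ℂ) * I) := by
          apply mul_right_cancel₀ hr0C
          calc (starRingEnd ℂ) (z n) * w' * ((r 0:ℝ):ℂ)
              = ((starRingEnd ℂ) (z n) * ((r 0:ℝ):ℂ)) * (Complex.exp ((c:ℝ) * I) * z 0) := by
                rw [hw']; ring
            _ = (((r n:ℝ):ℂ) * Complex.exp (-(B n : ℂ) * I) * (starRingEnd ℂ) (z 0))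
                * (Complex.exp ((c:ℝ) * I) * z 0) := by rw [keyconj n]
            _ = ((r n:ℝ):ℂ) * (Complex.exp (-(B n:ℂ) * I) * Complex.exp ((c:ℝ) * I))
                * ((starRingEnd ℂ) (z 0) * z 0) := by ring
            _ = ((r n:ℝ):ℂ) * Complex.exp (((c - B n : ℝ):ℂ) * I)
                * (((r 0:ℝ):ℂ) * ((r 0:ℝ):ℂ)) := by rw [exp_merge (B n) c, hconjz0]
            _ = _ := by ring
        rw [h2]
        simp only [Complex.mul_im, Complex.mul_re, Complex.ofReal_re, Complex.ofReal_im,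
          Complex.exp_ofReal_mul_I_im, Complex.exp_ofReal_mul_I_re]
        ring
      have hdetRx' : ∀ n : ℕ,
          detR x (toR2 (v (i₀ + (n : ZMod d)))) = r n * r 0 * Real.sin (B n - c) := by
        intro n
        have h1 : detR x (toR2 (v (i₀ + (n : ZMod d))))
            = - detR (toR2 (v (i₀ + (n : ZMod d)))) x := by
          simp only [detR]; ring
        rw [h1, hdetRx n, show B n - c = -(c - B n) by ring, Real.sin_neg]
        ring
      have hin0 : x ∈ interior (coneOf (v i₀) (v (i₀ + 1))) := by
        apply openCone_subset_interior (v i₀) (v (i₀ + 1)) (hdet1 i₀)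
        constructor
        · have e0 : (i₀ + ((0:ℕ) : ZMod d)) = i₀ := by push_cast; ring
          have h0 := hdetRx 0
          rw [e0] at h0
          rw [h0, hB0, sub_zero]
          exact mul_pos (mul_pos (hr 0) (hr 0)) (Real.sin_pos_of_pos_of_lt_pi hc0 hcpi)
        · have e1 : (i₀ + ((1:ℕ) : ZMod d)) = i₀ + 1 := by push_cast; ring
          have h0 := hdetRx' 1
          rw [e1] at h0
          rw [h0]
          exact mul_pos (mul_pos (hr 1) (hr 0))
            (Real.sin_pos_of_pos_of_lt_pi (by linarith) (by linarith))
      have hinm : x ∈ interior (coneOf (v (i₀ + (m : ZMod d))) (v (i₀ + (m : ZMod d) + 1))) := by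
        apply openCone_subset_interior _ _ (hdet1 (i₀ + (m : ZMod d)))
        constructor
        · have h0 := hdetRx m
          rw [h0, show c - B m = (c + 2 * π - B m) - 2 * π by ring, Real.sin_sub_two_pi]
          refine mul_pos (mul_pos (hr m) (hr 0)) (Real.sin_pos_of_pos_of_lt_pi ?_ ?_)
          · linarith
          · linarith [hBgap m]
        · have e1 : (i₀ + ((m + 1 : ℕ) : ZMod d)) = i₀ + (m : ZMod d) + 1 := by push_cast; ring
          have h0 := hdetRx' (m + 1)
          rw [e1] at h0
          rw [h0, show B (m+1) - c = (B (m+1) - (c + 2*π)) + 2*π by ring, Real.sin_add_two_pi]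
          refine mul_pos (mul_pos (hr (m+1)) (hr 0)) (Real.sin_pos_of_pos_of_lt_pi ?_ ?_)
          · linarith
          · linarith [hBgap m]
      have hne : i₀ ≠ i₀ + (m : ZMod d) := by
        intro heq
        have h0 : ((m : ℕ) : ZMod d) = 0 := by
          have h0' := congrArg (fun t => t - i₀) heq
          simpa using h0'.symm
        rw [ZMod.natCast_eq_zero_iff] at h0
        have := Nat.le_of_dvd (by omega) h0
        omega
      have hdis := hdisj i₀ (i₀ + (m : ZMod d)) hne
      rw [Set.eq_empty_iff_forall_notMem] at hdis
      exact hdis x ⟨hin0, hinm⟩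
  exact ⟨B, r, hr, hBmono, hBgap, hB0, hBd, dict⟩

end Main

end ThreeSingularAux

/-- A toric log del Pezzo surface with exactly three singular points has Picard
number at most four: LDP fan data with exactly three singular cones has length at most 6. -/
theorem three_singular_length_le_six (d : ℕ) (v : ZMod d → ℤ × ℤ)
    (h : IsLDPFanData d v) (hs : numSingular d v = 3) : d ≤ 6 := by
  by_contra hd6
  push_neg at hd6
  have hd : 7 ≤ d := hd6
  haveI : NeZero d := ⟨by omega⟩
  obtain ⟨⟨hd3, hprim, hdet1, hcov, hdisj⟩, hf⟩ := h
  unfold numSingular at hs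
  obtain ⟨j, hj, hj3⟩ := ThreeSingularAux.exists_pair d hd _ hs
  simp only [Set.mem_setOf_eq, not_le] at hj hj3
  have hDj : detZ (v j) (v (j + 1)) = 1 := by have := hdet1 j; omega
  have hDj3 : detZ (v (j + 3)) (v (j + 3 + 1)) = 1 := by have := hdet1 (j + 3); omega
  set i₀ : ZMod d := j - 1 with hi₀
  obtain ⟨B, r, hr, hBmono, hBgap, hB0, hBd, dict⟩ :=
    ThreeSingularAux.main_angles d v hd hprim hdet1 hdisj i₀
  have hSM : StrictMono B := strictMono_nat_of_lt_succ hBmono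
  -- translated LDP inequalities
  have hDrel : ∀ n : ℕ, 1 ≤ detZ (v (i₀ + (n : ZMod d))) (v (i₀ + ((n + 1 : ℕ) : ZMod d))) := by
    intro n
    have e : (i₀ + ((n + 1 : ℕ) : ZMod d)) = (i₀ + (n : ZMod d)) + 1 := by push_cast; ring
    rw [e]
    exact hdet1 _
  have hfrel : ∀ n : ℕ,
      detZ (v (i₀ + (n : ZMod d))) (v (i₀ + ((n + 2 : ℕ) : ZMod d))) ≤
        detZ (v (i₀ + (n : ZMod d))) (v (i₀ + ((n + 1 : ℕ) : ZMod d))) +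
        detZ (v (i₀ + ((n + 1 : ℕ) : ZMod d))) (v (i₀ + ((n + 2 : ℕ) : ZMod d))) - 1 := by
    intro n
    have h1 := hf (i₀ + ((n + 1 : ℕ) : ZMod d))
    unfold fanF at h1
    have e1 : i₀ + ((n + 1 : ℕ) : ZMod d) - 1 = i₀ + (n : ZMod d) := by push_cast; ring
    have e2 : i₀ + ((n + 1 : ℕ) : ZMod d) + 1 = i₀ + ((n + 2 : ℕ) : ZMod d) := by push_cast; ring
    rw [e1, e2] at h1
    have hskew := ThreeSingularAux.detZ_skew (v (i₀ + (n : ZMod d)))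
      (v (i₀ + ((n + 2 : ℕ) : ZMod d)))
    omega
  have hD1 : detZ (v (i₀ + ((1 : ℕ) : ZMod d))) (v (i₀ + ((2 : ℕ) : ZMod d))) = 1 := by
    have e1 : i₀ + ((1 : ℕ) : ZMod d) = j := by rw [hi₀]; push_cast; ring
    have e2 : i₀ + ((2 : ℕ) : ZMod d) = j + 1 := by rw [hi₀]; push_cast; ring
    rw [e1, e2]
    exact hDj
  have hD4 : detZ (v (i₀ + ((4 : ℕ) : ZMod d))) (v (i₀ + ((5 : ℕ) : ZMod d))) = 1 := by
    have e1 : i₀ + ((4 : ℕ) : ZMod d) = j + 3 := by rw [hi₀]; push_cast; ring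
    have e2 : i₀ + ((5 : ℕ) : ZMod d) = j + 3 + 1 := by rw [hi₀]; push_cast; ring
    rw [e1, e2]
    exact hDj3
  -- angle sign lemma
  have sign1 : ∀ a b : ℕ, a < b → b < d →
      detZ (v (i₀ + (a : ZMod d))) (v (i₀ + (b : ZMod d))) ≤ 0 → Real.pi ≤ B b - B a := by
    intro a b hab hbd hdet
    have h3 : 0 < B b - B a := by linarith [hSM hab]
    by_contra hlt
    push_neg at hlt
    have hsin : 0 < Real.sin (B b - B a) := Real.sin_pos_of_pos_of_lt_pi h3 hlt
    have hd2 := dict a b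
    have hpos : (0:ℝ) < ((detZ (v (i₀ + (a : ZMod d))) (v (i₀ + (b : ZMod d))) : ℤ) : ℝ) := by
      rw [hd2]
      exact mul_pos (mul_pos (hr a) (hr b)) hsin
    have : (0:ℤ) < detZ (v (i₀ + (a : ZMod d))) (v (i₀ + (b : ZMod d))) := by exact_mod_cast hpos
    omega
  -- the Pluecker lemma: a smooth cone spans, with its two neighbours, an angle ≥ π
  have J2 : ∀ a : ℕ, a + 3 < d →
      detZ (v (i₀ + ((a + 1 : ℕ) : ZMod d))) (v (i₀ + ((a + 2 : ℕ) : ZMod d))) = 1 →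
      Real.pi ≤ B (a + 3) - B a := by
    intro a ha hmid
    have hX := hfrel a
    have hY := hfrel (a + 1)
    have ea1 : a + 1 + 1 = a + 2 := by omega
    have ea2 : a + 1 + 2 = a + 3 := by omega
    rw [ea1, ea2] at hY
    rw [hmid] at hX hY
    rcases le_or_gt (detZ (v (i₀ + (a : ZMod d))) (v (i₀ + ((a + 2 : ℕ) : ZMod d)))) 0 with hX0 | hX0
    · have h1 := sign1 a (a + 2) (by omega) (by omega) hX0
      have h2 : B (a + 2) < B (a + 3) := hBmono _
      linarith
    rcases le_or_gt (detZ (v (i₀ + ((a + 1 : ℕ) : ZMod d))) (v (i₀ + ((a + 3 : ℕ) : ZMod d)))) 0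
      with hY0 | hY0
    · have h1 := sign1 (a + 1) (a + 3) (by omega) (by omega) hY0
      have h2 : B a < B (a + 1) := hBmono _
      linarith
    · have hpl := ThreeSingularAux.pluecker (v (i₀ + (a : ZMod d)))
        (v (i₀ + ((a + 1 : ℕ) : ZMod d))) (v (i₀ + ((a + 2 : ℕ) : ZMod d)))
        (v (i₀ + ((a + 3 : ℕ) : ZMod d)))
      rw [hmid] at hpl
      have hDa := hDrel a
      have hDa2 := hDrel (a + 2)
      rw [ea2] at hDa2
      have hZ : detZ (v (i₀ + (a : ZMod d))) (v (i₀ + ((a + 3 : ℕ) : ZMod d))) ≤ 0 := by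
        nlinarith
      exact sign1 a (a + 3) (by omega) (by omega) hZ
  have hJa := J2 0 (by omega) hD1
  have hJb := J2 3 (by omega) (by
    have e1 : (3:ℕ) + 1 = 4 := by omega
    have e2 : (3:ℕ) + 2 = 5 := by omega
    rw [e1, e2]
    exact hD4)
  have h6d : B 6 < B d := hSM (by omega)
  simp only [Nat.zero_add] at hJa
  have : (3:ℕ) + 3 = 6 := by omega
  rw [this] at hJb
  rw [hB0] at hJa
  linarith [hBd, hJa, hJb, h6d]
end

section
/- Let v_1, …, v_d be LDP fan data with d ≥ 4, and suppose that for some index i one has det(v_{i−1}, v_i) ≥ 2, det(v_i, v_{i+1}) = 1, and det(v_{i+1}, v_{i+2}) ≥ 2 (i.e., the cones σ_{i−1} and σ_{i+1} are singular while σ_i is nonsingular). Then det(v_{i+2}, v_{i−1}) ≥ 2; in particular, the cones σ_{i−1}, σ_i, σ_{i+1} together cover more than a half-plane. -/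
lemma detZ_skew (u w : ℤ × ℤ) : detZ u w = - detZ w u := by unfold detZ; ring

lemma detZ_self (u : ℤ × ℤ) : detZ u u = 0 := by unfold detZ; ring

lemma detZ_smul_add_right (u p q : ℤ × ℤ) (n : ℤ) :
    detZ u (n • p + q) = n * detZ u p + detZ u q := by
  unfold detZ
  simp only [Prod.fst_add, Prod.snd_add, Prod.smul_fst, Prod.smul_snd, smul_eq_mul]
  ring

lemma detZ_smul_add_left (p q u : ℤ × ℤ) (n : ℤ) :
    detZ (n • p + q) u = n * detZ p u + detZ q u := by
  unfold detZ
  simp only [Prod.fst_add, Prod.snd_add, Prod.smul_fst, Prod.smul_snd, smul_eq_mul]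
  ring

lemma detZ_add_right (u p q : ℤ × ℤ) : detZ u (p + q) = detZ u p + detZ u q := by
  unfold detZ
  simp only [Prod.fst_add, Prod.snd_add]
  ring

lemma detZ_add_left (p q u : ℤ × ℤ) : detZ (p + q) u = detZ p u + detZ q u := by
  unfold detZ
  simp only [Prod.fst_add, Prod.snd_add]
  ring

lemma coordFst (b c u : ℤ × ℤ) (h : detZ b c = 1) :
    u.1 = detZ u c * b.1 + detZ b u * c.1 := by
  unfold detZ at h ⊢; linear_combination (-u.1) * h

lemma coordSnd (b c u : ℤ × ℤ) (h : detZ b c = 1) :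
    u.2 = detZ u c * b.2 + detZ b u * c.2 := by
  unfold detZ at h ⊢; linear_combination (-u.2) * h

def detR (p q : ℝ × ℝ) : ℝ := p.1 * q.2 - p.2 * q.1

lemma detR_int (u z : ℤ × ℤ) : detR (toR2 u) (toR2 z) = (detZ u z : ℝ) := by
  unfold detR detZ toR2; push_cast; ring

lemma mem_interior_cone (u w : ℤ × ℤ) (h : 1 ≤ detZ u w) (x : ℝ × ℝ)
    (h1 : 0 < detR (toR2 u) x) (h2 : 0 < detR x (toR2 w)) :
    x ∈ interior (coneOf u w) := by
  have hD : (0:ℝ) < detR (toR2 u) (toR2 w) := by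
    rw [detR_int]; exact_mod_cast (by omega : (0:ℤ) < detZ u w)
  have hne : detR (toR2 u) (toR2 w) ≠ 0 := ne_of_gt hD
  have hsub : {y : ℝ × ℝ | 0 < detR (toR2 u) y ∧ 0 < detR y (toR2 w)} ⊆ coneOf u w := by
    rintro y ⟨hy1, hy2⟩
    refine ⟨detR y (toR2 w) / detR (toR2 u) (toR2 w),
            detR (toR2 u) y / detR (toR2 u) (toR2 w),
            le_of_lt (div_pos hy2 hD), le_of_lt (div_pos hy1 hD), ?_⟩
    apply Prod.ext
    · simp only [Prod.fst_add, Prod.smul_fst, smul_eq_mul]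
      field_simp
      unfold detR toR2 at *
      ring
    · simp only [Prod.snd_add, Prod.smul_snd, smul_eq_mul]
      field_simp
      unfold detR toR2 at *
      ring
  have hopen : IsOpen {y : ℝ × ℝ | 0 < detR (toR2 u) y ∧ 0 < detR y (toR2 w)} := by
    have c1 : Continuous fun y : ℝ × ℝ => detR (toR2 u) y := by unfold detR; fun_prop
    have c2 : Continuous fun y : ℝ × ℝ => detR y (toR2 w) := by unfold detR; fun_prop
    exact (isOpen_lt continuous_const c1).inter (isOpen_lt continuous_const c2)
  exact interior_maximal hsub hopen ⟨h1, h2⟩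

lemma overlap_false {d : ℕ} {v : ZMod d → ℤ × ℤ}
    (hdisj : ∀ i j, i ≠ j →
      interior (coneOf (v i) (v (i + 1))) ∩ interior (coneOf (v j) (v (j + 1))) = ∅)
    {j k : ZMod d} (hjk : j ≠ k)
    (hj : 1 ≤ detZ (v j) (v (j + 1))) (hk : 1 ≤ detZ (v k) (v (k + 1)))
    (z : ℤ × ℤ)
    (hz1 : 1 ≤ detZ (v j) z) (hz2 : 1 ≤ detZ z (v (j + 1)))
    (hz3 : 1 ≤ detZ (v k) z) (hz4 : 1 ≤ detZ z (v (k + 1))) : False := by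
  have m1 := mem_interior_cone _ _ hj (toR2 z)
    (by rw [detR_int]; exact_mod_cast (by omega : (0:ℤ) < detZ (v j) z))
    (by rw [detR_int]; exact_mod_cast (by omega : (0:ℤ) < detZ z (v (j + 1))))
  have m2 := mem_interior_cone _ _ hk (toR2 z)
    (by rw [detR_int]; exact_mod_cast (by omega : (0:ℤ) < detZ (v k) z))
    (by rw [detR_int]; exact_mod_cast (by omega : (0:ℤ) < detZ z (v (k + 1))))
  have hd := hdisj j k hjk
  rw [Set.eq_empty_iff_forall_notMem] at hd
  exact hd (toR2 z) ⟨m1, m2⟩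

lemma zmod_nat_ne_zero {d : ℕ} (n : ℕ) (h : ¬ d ∣ n) : (n : ZMod d) ≠ 0 := by
  rw [Ne, ZMod.natCast_eq_zero_iff]; exact h


set_option maxHeartbeats 2000000 in
/-- Lemma 3.1 (1): if in LDP fan data the cones `σ_{i−1}` and `σ_{i+1}` are singular
while `σ_i` is nonsingular, then `det(v_{i+2}, v_{i−1}) ≥ 2`. -/
theorem singular_nonsingular_singular_det (d : ℕ) (v : ZMod d → ℤ × ℤ)
    (hd : 4 ≤ d) (h : IsLDPFanData d v) (i : ZMod d)
    (h1 : 2 ≤ detZ (v (i - 1)) (v i))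
    (h2 : detZ (v i) (v (i + 1)) = 1)
    (h3 : 2 ≤ detZ (v (i + 1)) (v (i + 2))) :
    2 ≤ detZ (v (i + 2)) (v (i - 1)) := by
  obtain ⟨⟨hd3, hprim, hdet, hcover, hdisj⟩, hf⟩ := h
  by_contra hcon
  push_neg at hcon
  have hD1 : detZ (v (i + 2)) (v (i - 1)) ≤ 1 := by omega
  -- index rewrites
  have r1 : i + 1 + 1 = i + 2 := by ring
  have r2 : i + 2 + 1 = i + 3 := by ring
  have r3 : i + 3 + 1 = i + 4 := by ring
  have r4 : i + 1 - 1 = i := by ring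
  have r5 : i + 2 - 1 = i + 1 := by ring
  have r6 : i - 1 + 1 = i := by ring
  have n2 : i + 1 ≠ i - 1 := by
    intro hEq
    exact zmod_nat_ne_zero (d := d) 2 (fun hdvd => absurd (Nat.le_of_dvd (by norm_num) hdvd) (by omega)) (by push_cast; linear_combination hEq)
  have n3 : i + 2 ≠ i - 1 := by
    intro hEq
    exact zmod_nat_ne_zero (d := d) 3 (fun hdvd => absurd (Nat.le_of_dvd (by norm_num) hdvd) (by omega)) (by push_cast; linear_combination hEq)
  -- fan determinants
  have hde : 1 ≤ detZ (v (i + 2)) (v (i + 3)) := by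
    have := hdet (i + 2); rwa [r2] at this
  -- f-inequalities
  have hfi := hf i
  unfold fanF at hfi
  have hfi1 := hf (i + 1)
  unfold fanF at hfi1
  rw [r4, r1] at hfi1
  have hfi2 := hf (i + 2)
  unfold fanF at hfi2
  rw [r5, r2] at hfi2
  -- skew values
  have sCA : detZ (v (i + 1)) (v (i - 1)) = - detZ (v (i - 1)) (v (i + 1)) := detZ_skew _ _
  have sEB : detZ (v (i + 2)) (v i) = - detZ (v i) (v (i + 2)) := detZ_skew _ _
  -- bounds from f
  have hP : detZ (v (i - 1)) (v (i + 1)) ≤ detZ (v (i - 1)) (v i) := by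
    rw [h2] at hfi; linarith
  have hS : detZ (v i) (v (i + 2)) ≤ detZ (v (i + 1)) (v (i + 2)) := by
    rw [h2] at hfi1; linarith
  -- key identity S*P = R*Q - D
  have hSP : detZ (v i) (v (i + 2)) * detZ (v (i - 1)) (v (i + 1)) =
      detZ (v (i + 1)) (v (i + 2)) * detZ (v (i - 1)) (v i)
      - detZ (v (i + 2)) (v (i - 1)) * detZ (v i) (v (i + 1)) := by
    unfold detZ; ring
  rw [h2, mul_one] at hSP
  have hSPval : 3 ≤ detZ (v i) (v (i + 2)) * detZ (v (i - 1)) (v (i + 1)) := by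
    nlinarith [mul_le_mul h3 h1 (by norm_num) (by linarith)]
  rcases lt_trichotomy (detZ (v i) (v (i + 2))) 0 with hSneg | hS0 | hSpos
  -- ===================== NEGATIVE CASE =====================
  · have hS1 : detZ (v i) (v (i + 2)) ≤ -1 := by omega
    have hP1 : detZ (v (i - 1)) (v (i + 1)) ≤ -1 := by
      by_contra h'
      push_neg at h'
      have hP0 : 0 ≤ detZ (v (i - 1)) (v (i + 1)) := by omega
      have : detZ (v i) (v (i + 2)) * detZ (v (i - 1)) (v (i + 1)) ≤ 0 :=
        mul_nonpos_iff.mpr (Or.inr ⟨by omega, hP0⟩)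
      linarith
    rcases lt_trichotomy (detZ (v (i + 2)) (v (i - 1))) 0 with hDneg | hD0 | hDpos
    -- ----- D ≤ -1 : σ_{i+1} and σ_{i-1} overlap at e + a
    · refine overlap_false hdisj n2 (hdet (i + 1)) ?_ (v (i + 2) + v (i - 1)) ?_ ?_ ?_ ?_
      · rw [r6]; exact le_trans (by norm_num) h1
      · rw [detZ_add_right]
        have hs := detZ_skew (v (i + 1)) (v (i - 1))
        linarith
      · rw [r1, detZ_add_left, detZ_self]
        have hs := detZ_skew (v (i - 1)) (v (i + 2))
        linarith
      · rw [detZ_add_right, detZ_self]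
        have hs := detZ_skew (v (i - 1)) (v (i + 2))
        linarith
      · rw [r6, detZ_add_left]
        linarith [sEB]
    -- ----- D = 0 : σ_{i+2} and σ_{i-1} overlap at N•e + w
    · have hae : detZ (v (i - 1)) (v (i + 2)) = 0 := by
        rw [detZ_skew, hD0]; ring
      have hAW : 1 ≤ detZ (v (i - 1)) (v (i + 3)) := by
        have I5 : detZ (v (i - 1)) (v (i + 3)) * detZ (v (i + 2)) (v (i + 1)) -
            detZ (v (i - 1)) (v (i + 2)) * detZ (v (i + 3)) (v (i + 1)) +
            detZ (v (i - 1)) (v (i + 1)) * detZ (v (i + 3)) (v (i + 2)) = 0 := by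
          unfold detZ; ring
        rw [hae, zero_mul, sub_zero] at I5
        have s1 : detZ (v (i + 2)) (v (i + 1)) = - detZ (v (i + 1)) (v (i + 2)) := detZ_skew _ _
        have s2 : detZ (v (i + 3)) (v (i + 2)) = - detZ (v (i + 2)) (v (i + 3)) := detZ_skew _ _
        rw [s1, s2] at I5
        by_contra hng
        push_neg at hng
        have hng' : detZ (v (i - 1)) (v (i + 3)) ≤ 0 := by omega
        nlinarith [mul_nonneg (by linarith : (0:ℤ) ≤ -detZ (v (i - 1)) (v (i + 3)))
            (by linarith : (0:ℤ) ≤ detZ (v (i + 1)) (v (i + 2))),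
          mul_le_mul (by linarith : (1:ℤ) ≤ -detZ (v (i - 1)) (v (i + 1)))
            (by linarith : (1:ℤ) ≤ detZ (v (i + 2)) (v (i + 3))) (by norm_num) (by linarith)]
      set N : ℤ := 1 + |detZ (v (i + 3)) (v i)| with hN
      have hNpos : 1 ≤ N := by
        have := abs_nonneg (detZ (v (i + 3)) (v i)); omega
      refine overlap_false hdisj n3 (hdet (i + 2)) ?_ (N • v (i + 2) + v (i + 3)) ?_ ?_ ?_ ?_
      · rw [r6]; exact le_trans (by norm_num) h1
      · rw [detZ_smul_add_right, detZ_self, mul_zero, zero_add]; exact hde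
      · rw [r2, detZ_smul_add_left, detZ_self, add_zero]
        nlinarith [mul_le_mul hNpos hde (by norm_num) (by linarith)]
      · rw [detZ_smul_add_right, hae, mul_zero, zero_add]; exact hAW
      · rw [r6, detZ_smul_add_left]
        have key : N * 1 ≤ N * detZ (v (i + 2)) (v i) := by
          apply mul_le_mul_of_nonneg_left _ (by linarith)
          linarith [sEB]
        have habs := neg_abs_le (detZ (v (i + 3)) (v i))
        linarith
    -- ----- D = 1
    · have hD1' : detZ (v (i + 2)) (v (i - 1)) = 1 := by omega
      rcases le_or_gt 1 (detZ (v (i - 1)) (v (i + 3))) with hAw | hAw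
      -- overlap σ_{i+2}, σ_{i-1} at N•a + b
      · set N : ℤ := 1 + |detZ (v i) (v (i + 3))| with hN
        have hNpos : 1 ≤ N := by
          have := abs_nonneg (detZ (v i) (v (i + 3))); omega
        refine overlap_false hdisj n3 (hdet (i + 2)) ?_ (N • v (i - 1) + v i) ?_ ?_ ?_ ?_
        · rw [r6]; exact le_trans (by norm_num) h1
        · rw [detZ_smul_add_right, hD1', mul_one]
          linarith [sEB]
        · rw [r2, detZ_smul_add_left]
          have key : N * 1 ≤ N * detZ (v (i - 1)) (v (i + 3)) := by
            apply mul_le_mul_of_nonneg_left hAw (by linarith)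
          have habs := neg_abs_le (detZ (v i) (v (i + 3)))
          linarith
        · rw [detZ_smul_add_right, detZ_self, mul_zero, zero_add]; linarith
        · rw [r6, detZ_smul_add_left, detZ_self, add_zero]
          nlinarith [mul_le_mul hNpos (by linarith : (1:ℤ) ≤ detZ (v (i - 1)) (v i))
            (by norm_num) (by linarith)]
      -- w is a nonnegative multiple of a
      · have hA0 : 0 ≤ detZ (v (i + 3)) (v (i - 1)) := by
          have hs := detZ_skew (v (i - 1)) (v (i + 3)); omega
        have I2 : detZ (v (i + 3)) (v (i + 1)) * detZ (v (i + 2)) (v (i - 1)) -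
            detZ (v (i + 3)) (v (i + 2)) * detZ (v (i + 1)) (v (i - 1)) +
            detZ (v (i + 3)) (v (i - 1)) * detZ (v (i + 1)) (v (i + 2)) = 0 := by
          unfold detZ; ring
        rw [hD1', mul_one] at I2
        have sWE : detZ (v (i + 3)) (v (i + 2)) = - detZ (v (i + 2)) (v (i + 3)) := detZ_skew _ _
        rw [sWE, sCA] at I2
        -- I2 : WC - (-B)*(-P) + A*R = 0, i.e. WC = B*P - A*R
        have hA : detZ (v (i + 3)) (v (i - 1)) = 0 := by
          by_contra hne
          have hA1 : 1 ≤ detZ (v (i + 3)) (v (i - 1)) := by omega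
          nlinarith [hfi2, I2, hde, h3, hP1,
            mul_nonneg (by linarith : (0:ℤ) ≤ detZ (v (i + 2)) (v (i + 3)))
              (by linarith : (0:ℤ) ≤ -(1 + detZ (v (i - 1)) (v (i + 1)))),
            mul_le_mul_of_nonneg_right hA1 (by linarith : (0:ℤ) ≤ detZ (v (i + 1)) (v (i + 2)))]
        have haw0 : detZ (v (i - 1)) (v (i + 3)) = 0 := by
          rw [detZ_skew, hA]; ring
        rcases eq_or_lt_of_le hd with hd4 | hd5
        -- d = 4 : arithmetic contradiction
        · subst hd4
          have h40 : (4 : ZMod 4) = 0 := by decide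
          have e34 : i + 3 = i - 1 := by linear_combination h40
          have hw_eq : v (i + 3) = v (i - 1) := congrArg v e34
          have e_im2 : i - 1 - 1 = i + 2 := by linear_combination -h40
          have hfim := hf (i - 1)
          unfold fanF at hfim
          rw [e_im2, r6] at hfim
          rw [hD1'] at hfim
          -- hfim : 1 ≤ 1 + Q + S, so S ≥ -Q
          rw [hw_eq] at hfi2
          rw [hD1'] at hfi2
          -- hfi2 : 1 ≤ R + 1 + P, so P ≥ -R
          rw [hD1'] at hSP
          -- hSP : S*P = R*Q - 1
          have hSQ : detZ (v i) (v (i + 2)) = - detZ (v (i - 1)) (v i) := by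
            by_contra hne
            have hge : - detZ (v (i - 1)) (v i) + 1 ≤ detZ (v i) (v (i + 2)) := by
              have : - detZ (v (i - 1)) (v i) ≤ detZ (v i) (v (i + 2)) := by linarith
              omega
            nlinarith [hSP, mul_le_mul (by linarith : -detZ (v i) (v (i + 2)) ≤ detZ (v (i - 1)) (v i) - 1)
              (by linarith : -detZ (v (i - 1)) (v (i + 1)) ≤ detZ (v (i + 1)) (v (i + 2)))
              (by linarith) (by linarith)]
          have hQRP : detZ (v (i - 1)) (v i) *
              (detZ (v (i + 1)) (v (i + 2)) + detZ (v (i - 1)) (v (i + 1))) = 1 := by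
            linear_combination -hSP + detZ (v (i - 1)) (v (i + 1)) * hSQ
          rcases le_or_gt (detZ (v (i + 1)) (v (i + 2)) + detZ (v (i - 1)) (v (i + 1))) 0 with hc0 | hc0
          · nlinarith [mul_nonpos_iff.mpr (Or.inl ⟨(by linarith : (0:ℤ) ≤ detZ (v (i - 1)) (v i)), hc0⟩)]
          · nlinarith [mul_le_mul (by linarith : (2:ℤ) ≤ detZ (v (i - 1)) (v i))
              (by omega : (1:ℤ) ≤ detZ (v (i + 1)) (v (i + 2)) + detZ (v (i - 1)) (v (i + 1)))
              (by norm_num) (by linarith)]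
        -- d ≥ 5 : σ_{i+3} and σ_{i-1} overlap at N•w + z
        · have n4 : i + 3 ≠ i - 1 := by
            intro hEq
            exact zmod_nat_ne_zero (d := d) 4 (fun hdvd => absurd (Nat.le_of_dvd (by norm_num) hdvd) (by omega)) (by push_cast; linear_combination hEq)
          have hdw : 1 ≤ detZ (v (i + 3)) (v (i + 4)) := by
            have := hdet (i + 3); rwa [r3] at this
          have hAZ : 1 ≤ detZ (v (i - 1)) (v (i + 4)) := by
            have I3 : detZ (v (i - 1)) (v (i + 4)) * detZ (v (i + 3)) (v (i + 2)) -
                detZ (v (i - 1)) (v (i + 3)) * detZ (v (i + 4)) (v (i + 2)) +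
                detZ (v (i - 1)) (v (i + 2)) * detZ (v (i + 4)) (v (i + 3)) = 0 := by
              unfold detZ; ring
            have haem : detZ (v (i - 1)) (v (i + 2)) = -1 := by
              rw [detZ_skew, hD1']
            have sZW : detZ (v (i + 4)) (v (i + 3)) = - detZ (v (i + 3)) (v (i + 4)) := detZ_skew _ _
            have sWE : detZ (v (i + 3)) (v (i + 2)) = - detZ (v (i + 2)) (v (i + 3)) := detZ_skew _ _
            rw [haw0, zero_mul, sub_zero, haem, sZW, sWE] at I3
            -- I3 : AZ * (-B) + (-1) * (-WZ) = 0, so AZ * B = WZ ≥ 1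
            by_contra hng
            push_neg at hng
            have hng' : detZ (v (i - 1)) (v (i + 4)) ≤ 0 := by omega
            nlinarith [mul_nonneg (by linarith : (0:ℤ) ≤ -detZ (v (i - 1)) (v (i + 4)))
              (by linarith : (0:ℤ) ≤ detZ (v (i + 2)) (v (i + 3)))]
          have hWB : 1 ≤ detZ (v (i + 3)) (v i) := by
            have I4 : detZ (v (i + 3)) (v i) * detZ (v (i + 2)) (v (i - 1)) -
                detZ (v (i + 3)) (v (i + 2)) * detZ (v i) (v (i - 1)) +
                detZ (v (i + 3)) (v (i - 1)) * detZ (v i) (v (i + 2)) = 0 := by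
              unfold detZ; ring
            have sWE : detZ (v (i + 3)) (v (i + 2)) = - detZ (v (i + 2)) (v (i + 3)) := detZ_skew _ _
            have sBA : detZ (v i) (v (i - 1)) = - detZ (v (i - 1)) (v i) := detZ_skew _ _
            rw [hD1', mul_one, hA, zero_mul, add_zero, sWE, sBA] at I4
            -- I4 : WB - (-B)*(-Q) = 0, so WB = B*Q ≥ 2
            nlinarith [mul_le_mul hde (by linarith : (2:ℤ) ≤ detZ (v (i - 1)) (v i))
              (by norm_num) (by linarith)]
          set N : ℤ := 1 + |detZ (v (i + 4)) (v i)| with hN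
          have hNpos : 1 ≤ N := by
            have := abs_nonneg (detZ (v (i + 4)) (v i)); omega
          refine overlap_false hdisj n4 (hdet (i + 3)) ?_ (N • v (i + 3) + v (i + 4)) ?_ ?_ ?_ ?_
          · rw [r6]; exact le_trans (by norm_num) h1
          · rw [detZ_smul_add_right, detZ_self, mul_zero, zero_add]; exact hdw
          · rw [r3, detZ_smul_add_left, detZ_self, add_zero]
            nlinarith [mul_le_mul hNpos hdw (by norm_num) (by linarith)]
          · rw [detZ_smul_add_right, haw0, mul_zero, zero_add]; exact hAZ
          · rw [r6, detZ_smul_add_left]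
            have key : N * 1 ≤ N * detZ (v (i + 3)) (v i) := by
              apply mul_le_mul_of_nonneg_left hWB (by linarith)
            have habs := neg_abs_le (detZ (v (i + 4)) (v i))
            linarith
  -- ===================== S = 0 : impossible =====================
  · rw [hS0, zero_mul] at hSPval; omega
  -- ===================== POSITIVE CASE =====================
  · have hS1 : 1 ≤ detZ (v i) (v (i + 2)) := hSpos
    have hP1 : 1 ≤ detZ (v (i - 1)) (v (i + 1)) := by
      by_contra h'
      push_neg at h'
      have hP0 : detZ (v (i - 1)) (v (i + 1)) ≤ 0 := by omega
      have : detZ (v i) (v (i + 2)) * detZ (v (i - 1)) (v (i + 1)) ≤ 0 :=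
        mul_nonpos_iff.mpr (Or.inl ⟨by omega, hP0⟩)
      linarith
    have hSR : detZ (v i) (v (i + 2)) = detZ (v (i + 1)) (v (i + 2)) := by
      by_contra hne
      have hSR' : detZ (v i) (v (i + 2)) ≤ detZ (v (i + 1)) (v (i + 2)) - 1 := by omega
      nlinarith [hSP, hD1,
        mul_le_mul_of_nonneg_right hSR' (by linarith : (0:ℤ) ≤ detZ (v (i - 1)) (v (i + 1))),
        mul_le_mul_of_nonneg_left hP (by linarith : (0:ℤ) ≤ detZ (v (i + 1)) (v (i + 2)) - 1)]
    rw [hSR] at hSP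
    have hPQ : detZ (v (i - 1)) (v (i + 1)) = detZ (v (i - 1)) (v i) := by
      by_contra hne
      have hP' : detZ (v (i - 1)) (v (i + 1)) ≤ detZ (v (i - 1)) (v i) - 1 := by omega
      nlinarith [hSP, hD1,
        mul_le_mul_of_nonneg_left hP' (by linarith : (0:ℤ) ≤ detZ (v (i + 1)) (v (i + 2)))]
    rw [hPQ] at hSP
    have hD0 : detZ (v (i + 2)) (v (i - 1)) = 0 := by linarith
    have he1 : (v (i + 2)).1 = detZ (v (i + 1)) (v (i + 2)) * ((v (i + 1)).1 - (v i).1) := by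
      have hc := coordFst (v i) (v (i + 1)) (v (i + 2)) h2
      have hsk : detZ (v (i + 2)) (v (i + 1)) = - detZ (v (i + 1)) (v (i + 2)) := detZ_skew _ _
      linear_combination hc + (v i).1 * hsk + (v (i + 1)).1 * hSR
    have he2 : (v (i + 2)).2 = detZ (v (i + 1)) (v (i + 2)) * ((v (i + 1)).2 - (v i).2) := by
      have hc := coordSnd (v i) (v (i + 1)) (v (i + 2)) h2
      have hsk : detZ (v (i + 2)) (v (i + 1)) = - detZ (v (i + 1)) (v (i + 2)) := detZ_skew _ _
      linear_combination hc + (v i).2 * hsk + (v (i + 1)).2 * hSR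
    have hg := hprim (i + 2)
    rw [he1, he2, Int.gcd_mul_left] at hg
    have hdvd : (detZ (v (i + 1)) (v (i + 2))).natAbs ∣ 1 := ⟨_, hg.symm⟩
    rw [Nat.dvd_one] at hdvd
    omega
end
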